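/- arXiv:2412.00587 — 3 statements merged into one kernel-verified Lean document; each statement's English description precedes it below -/
import Mathlib

section
/- Let E be a Polish space with Borel σ-algebra 𝓔, and let Q_n, Q be Markov kernels on E such that for every x ∈ E, sup_{B ∈ 𝓔} |Q_n(x,B) − Q(x,B)| → 0 as n → ∞. Assume there are Δ ∈ [0,1) and Borel probability measures π_n, π on E such that for all positive integers k, all n and all x ∈ E: sup_{B ∈ 𝓔} |(Q_n)^k(x,B) − π_n(B)| ≤ Δ^k and sup_{B ∈ 𝓔} |Q^k(x,B) − π(B)| ≤ Δ^k. Then sup_{B ∈ 𝓔} |π_n(B) − π(B)| → 0 as n → ∞. -/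
open MeasureTheory ProbabilityTheory Filter
open scoped ENNReal

/-- Total variation distance `sup_{B ∈ 𝓔} |μ(B) − ν(B)|`. -/
noncomputable def tvDist {E : Type*} [MeasurableSpace E] (μ ν : Measure E) : ℝ :=
  ⨆ B : {B : Set E // MeasurableSet B}, |(μ B.1).toReal - (ν B.1).toReal|

/-- `k`-th iterate of a kernel: `Q^0 = id`, `Q^{k+1}(x,B) = ∫ Q^k(y,B) Q(x,dy)`. -/
noncomputable def kIter {E : Type*} [MeasurableSpace E] (Q : Kernel E E) : ℕ → Kernel E E
  | 0 => Kernel.id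
  | k + 1 => (kIter Q k) ∘ₖ Q

section tvBasic
variable {E : Type*} [MeasurableSpace E] (μ ν : Measure E)
  [IsProbabilityMeasure μ] [IsProbabilityMeasure ν]

lemma tv_abs_le_one (B : Set E) : |(μ B).toReal - (ν B).toReal| ≤ 1 := by
  rw [abs_sub_le_iff]
  constructor <;>
  · have h1 : (μ B).toReal ≤ 1 := by
      simpa using ENNReal.toReal_mono (by simp) (prob_le_one (μ := μ) (s := B))
    have h2 : (ν B).toReal ≤ 1 := by
      simpa using ENNReal.toReal_mono (by simp) (prob_le_one (μ := ν) (s := B))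
    have h3 : 0 ≤ (μ B).toReal := ENNReal.toReal_nonneg
    have h4 : 0 ≤ (ν B).toReal := ENNReal.toReal_nonneg
    linarith

lemma tv_bdd : BddAbove (Set.range fun B : {B : Set E // MeasurableSet B} =>
    |(μ B.1).toReal - (ν B.1).toReal|) := by
  refine ⟨1, ?_⟩
  rintro x ⟨B, rfl⟩
  exact tv_abs_le_one μ ν B.1

lemma le_tvDist {B : Set E} (hB : MeasurableSet B) :
    |(μ B).toReal - (ν B).toReal| ≤ tvDist μ ν :=
  le_ciSup (tv_bdd μ ν) ⟨B, hB⟩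

lemma tvDist_nonneg : 0 ≤ tvDist μ ν :=
  le_trans (abs_nonneg _) (le_tvDist μ ν MeasurableSet.empty)

omit [IsProbabilityMeasure μ] [IsProbabilityMeasure ν] in
lemma tvDist_le {c : ℝ} (h : ∀ B : Set E, MeasurableSet B → |(μ B).toReal - (ν B).toReal| ≤ c) :
    tvDist μ ν ≤ c :=
  ciSup_le (fun B => h B.1 B.2)

lemma tvDist_le_one : tvDist μ ν ≤ 1 := tvDist_le μ ν (fun B _ => tv_abs_le_one μ ν B)

omit [IsProbabilityMeasure μ] [IsProbabilityMeasure ν] in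
lemma tvDist_comm : tvDist μ ν = tvDist ν μ := by
  unfold tvDist
  congr 1; ext B; rw [abs_sub_comm]

lemma tvDist_self : tvDist μ μ = 0 :=
  le_antisymm (tvDist_le μ μ (by simp)) (tvDist_nonneg μ μ)

/-- For measurable `f` with values in `[0,1]`, `∫ f dμ - ∫ f dν ≤ tvDist μ ν`. -/
lemma integral_sub_le_tvDist {f : E → ℝ} (hf : Measurable f) (h0 : ∀ x, 0 ≤ f x)
    (h1 : ∀ x, f x ≤ 1) : ∫ x, f x ∂μ - ∫ x, f x ∂ν ≤ tvDist μ ν := by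
  have key : ∫⁻ x, ENNReal.ofReal (f x) ∂μ ≤
      ∫⁻ x, ENNReal.ofReal (f x) ∂ν + ENNReal.ofReal (tvDist μ ν) := by
    rw [lintegral_eq_lintegral_meas_lt μ (Eventually.of_forall h0) hf.aemeasurable,
      lintegral_eq_lintegral_meas_lt ν (Eventually.of_forall h0) hf.aemeasurable]
    rw [← Set.Ioc_union_Ioi_eq_Ioi (zero_le_one (α := ℝ)),
        lintegral_union measurableSet_Ioi (Set.Ioc_disjoint_Ioi le_rfl),
        lintegral_union measurableSet_Ioi (Set.Ioc_disjoint_Ioi le_rfl)]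
    have hempty : ∀ t : ℝ, t ∈ Set.Ioi (1:ℝ) → ∀ (ρ : Measure E),
        ρ {a : E | t < f a} = 0 := by
      intro t ht ρ
      have : {a : E | t < f a} = ∅ := by
        ext a; simp only [Set.mem_setOf_eq, Set.mem_empty_iff_false, iff_false, not_lt]
        exact (h1 a).trans (le_of_lt ht)
      simp [this]
    have e1 : ∫⁻ t in Set.Ioi (1:ℝ), μ {a : E | t < f a} = 0 := by
      rw [setLIntegral_congr_fun measurableSet_Ioi
        (fun t ht => hempty t ht μ)]
      simp
    have e2 : ∫⁻ t in Set.Ioi (1:ℝ), ν {a : E | t < f a} = 0 := by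
      rw [setLIntegral_congr_fun measurableSet_Ioi
        (fun t ht => hempty t ht ν)]
      simp
    rw [e1, e2, add_zero, add_zero]
    have step : ∫⁻ t in Set.Ioc (0:ℝ) 1, μ {a : E | t < f a} ≤
        ∫⁻ t in Set.Ioc (0:ℝ) 1, (ν {a : E | t < f a} + ENNReal.ofReal (tvDist μ ν)) := by
      apply lintegral_mono
      intro t
      have hBmeas : MeasurableSet {a : E | t < f a} := measurableSet_lt measurable_const hf
      have := le_tvDist μ ν hBmeas
      rw [abs_sub_le_iff] at this
      have h2 := this.1
      calc μ {a : E | t < f a} = ENNReal.ofReal (μ {a : E | t < f a}).toReal := by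
            rw [ENNReal.ofReal_toReal (measure_ne_top μ _)]
        _ ≤ ENNReal.ofReal ((ν {a : E | t < f a}).toReal + tvDist μ ν) := by
            apply ENNReal.ofReal_le_ofReal; linarith
        _ ≤ ENNReal.ofReal (ν {a : E | t < f a}).toReal + ENNReal.ofReal (tvDist μ ν) :=
            ENNReal.ofReal_add_le
        _ = ν {a : E | t < f a} + ENNReal.ofReal (tvDist μ ν) := by
            rw [ENNReal.ofReal_toReal (measure_ne_top ν _)]
    calc ∫⁻ t in Set.Ioc (0:ℝ) 1, μ {a : E | t < f a} ≤ _ := step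
      _ = (∫⁻ t in Set.Ioc (0:ℝ) 1, ν {a : E | t < f a}) +
          ENNReal.ofReal (tvDist μ ν) * volume (Set.Ioc (0:ℝ) 1) := by
          rw [lintegral_add_right _ measurable_const, setLIntegral_const]
      _ = (∫⁻ t in Set.Ioc (0:ℝ) 1, ν {a : E | t < f a}) + ENNReal.ofReal (tvDist μ ν) := by
          rw [Real.volume_Ioc]; norm_num
  have hμ : ∫ x, f x ∂μ = (∫⁻ x, ENNReal.ofReal (f x) ∂μ).toReal :=
    integral_eq_lintegral_of_nonneg_ae (Eventually.of_forall h0) hf.aestronglyMeasurable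
  have hν : ∫ x, f x ∂ν = (∫⁻ x, ENNReal.ofReal (f x) ∂ν).toReal :=
    integral_eq_lintegral_of_nonneg_ae (Eventually.of_forall h0) hf.aestronglyMeasurable
  have hfinν : ∫⁻ x, ENNReal.ofReal (f x) ∂ν ≠ ⊤ := by
    apply ne_of_lt
    calc ∫⁻ x, ENNReal.ofReal (f x) ∂ν ≤ ∫⁻ _, 1 ∂ν :=
          lintegral_mono (fun x => by simpa using ENNReal.ofReal_le_ofReal (h1 x))
      _ = 1 := by simp
      _ < ⊤ := by simp
  rw [hμ, hν]
  have := ENNReal.toReal_mono (by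
      simp [ENNReal.add_ne_top, hfinν]) key
  rw [ENNReal.toReal_add hfinν (by simp), ENNReal.toReal_ofReal (tvDist_nonneg μ ν)] at this
  linarith

lemma abs_integral_sub_le_tvDist {f : E → ℝ} (hf : Measurable f) (h0 : ∀ x, 0 ≤ f x)
    (h1 : ∀ x, f x ≤ 1) : |∫ x, f x ∂μ - ∫ x, f x ∂ν| ≤ tvDist μ ν := by
  rw [abs_sub_le_iff]
  exact ⟨integral_sub_le_tvDist μ ν hf h0 h1,
    (integral_sub_le_tvDist ν μ hf h0 h1).trans (tvDist_comm ν μ).le⟩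

lemma integrable_of_bdd {f : E → ℝ} (hf : Measurable f) (C : ℝ) (h : ∀ x, |f x| ≤ C) :
    Integrable f μ :=
  ⟨hf.aestronglyMeasurable, HasFiniteIntegral.of_bounded (C := C)
    (Eventually.of_forall (by simpa [Real.norm_eq_abs] using h))⟩

end tvBasic

instance kIter_isMarkovKernel {E : Type*} [MeasurableSpace E] (Q : Kernel E E)
    [IsMarkovKernel Q] (k : ℕ) : IsMarkovKernel (kIter Q k) := by
  induction k with
  | zero => rw [kIter]; infer_instance
  | succ k ih => rw [kIter]; infer_instance

lemma kIter_succ_toReal {E : Type*} [MeasurableSpace E] (Q : Kernel E E) [IsMarkovKernel Q]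
    (k : ℕ) (x : E) {B : Set E} (hB : MeasurableSet B) :
    ((kIter Q (k+1)) x B).toReal = ∫ y, ((kIter Q k) y B).toReal ∂(Q x) := by
  rw [show kIter Q (k+1) = (kIter Q k) ∘ₖ Q from rfl,
    Kernel.comp_apply' _ _ _ hB,
    integral_toReal ((Kernel.measurable_coe _ hB)).aemeasurable
      (ae_of_all _ fun y => measure_lt_top _ _)]

section polish
variable {E : Type*} [TopologicalSpace E] [PolishSpace E] [MeasurableSpace E] [BorelSpace E]

set_option maxHeartbeats 1000000 in
/-- There is a countable family of measurable sets computing the TV distance between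
any two probability measures. -/
lemma exists_tv_seq : ∃ S : ℕ → Set E, (∀ n, MeasurableSet (S n)) ∧
    ∀ (μ ν : Measure E), IsProbabilityMeasure μ → IsProbabilityMeasure ν →
      tvDist μ ν = ⨆ n, |(μ (S n)).toReal - (ν (S n)).toReal| := by
  classical
  set 𝔅 : Set (Set E) := TopologicalSpace.countableBasis E with h𝔅
  have hbasis : TopologicalSpace.IsTopologicalBasis 𝔅 := TopologicalSpace.isBasis_countableBasis E
  have hcount : 𝔅.Countable := TopologicalSpace.countable_countableBasis E
  set T : Set (Set E) := (fun t => ⋃₀ t) '' {t | t.Finite ∧ t ⊆ 𝔅} with hT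
  have hTcount : T.Countable := (Set.countable_setOf_finite_subset hcount).image _
  have hTne : T.Nonempty := ⟨∅, ⟨∅, ⟨Set.finite_empty, Set.empty_subset _⟩, by simp⟩⟩
  obtain ⟨S, hS⟩ := hTcount.exists_eq_range hTne
  have hSopen : ∀ n, IsOpen (S n) := by
    intro n
    have hmem : S n ∈ T := hS ▸ Set.mem_range_self n
    obtain ⟨t, ⟨_, ht𝔅⟩, heq⟩ := hmem
    rw [← heq]
    exact isOpen_sUnion (fun s hs => hbasis.isOpen (ht𝔅 hs))
  have hSmeas : ∀ n, MeasurableSet (S n) := fun n => (hSopen n).measurableSet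
  refine ⟨S, hSmeas, ?_⟩
  have approx_open : ∀ (m : Measure E), IsFiniteMeasure m → ∀ U : Set E, IsOpen U →
      ∀ ε : ℝ≥0∞, ε ≠ 0 → ∃ n, S n ⊆ U ∧ m U ≤ m (S n) + ε := by
    intro m hm U hU ε hε
    have hUeq : U = ⋃₀ {s | s ∈ 𝔅 ∧ s ⊆ U} := hbasis.open_eq_sUnion' hU
    set S' : Set (Set E) := {s | s ∈ 𝔅 ∧ s ⊆ U} with hS'
    rcases S'.eq_empty_or_nonempty with hS'e | hS'ne
    · have hU0 : U = ∅ := by rw [hUeq, hS'e]; simp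
      obtain ⟨n, hn⟩ : ∃ n, S n = ∅ := by
        have : (∅ : Set E) ∈ T := ⟨∅, ⟨Set.finite_empty, Set.empty_subset _⟩, by simp⟩
        rw [hS] at this; obtain ⟨n, hn⟩ := this; exact ⟨n, hn⟩
      refine ⟨n, by simp [hn, hU0], by simp [hU0]⟩
    · obtain ⟨f, hf⟩ := ((hcount.mono (fun s hs => hs.1)).exists_eq_range hS'ne :
        ∃ f : ℕ → Set E, S' = Set.range f)
      set g : ℕ → Set E := fun n => ⋃ i ∈ Set.Iio (n+1), f i with hg
      have hfU : ∀ i, f i ⊆ U := by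
        intro i
        have : f i ∈ S' := hf ▸ Set.mem_range_self i
        exact this.2
      have hgT : ∀ n, g n ∈ T := by
        intro n
        refine ⟨f '' Set.Iio (n+1), ⟨(Set.finite_Iio _).image f, ?_⟩, ?_⟩
        · rintro s ⟨i, _, rfl⟩
          have : f i ∈ S' := hf ▸ Set.mem_range_self i
          exact this.1
        · simp [hg, Set.sUnion_image]
      have hgU' : ∀ n, g n ⊆ U := fun n => Set.iUnion₂_subset fun i _ => hfU i
      have hgmono : Monotone g := by
        intro a b hab
        exact Set.biUnion_subset_biUnion_left (Set.Iio_subset_Iio (by omega))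
      have hgU : ⋃ n, g n = U := by
        apply Set.Subset.antisymm (Set.iUnion_subset hgU')
        rw [hUeq, hf, Set.sUnion_range]
        refine Set.iUnion_subset fun i => ?_
        exact Set.subset_iUnion_of_subset i fun x hx =>
          Set.mem_biUnion (Set.mem_Iio.2 (Nat.lt_succ_self i)) hx
      have hsup : m U = ⨆ n, m (g n) := by
        rw [← hgU]
        exact hgmono.measure_iUnion
      by_cases hmU : m U ≤ ε
      · obtain ⟨j, hj⟩ : ∃ j, S j = g 0 := by
          have := hgT 0; rw [hS] at this; obtain ⟨j, hj⟩ := this; exact ⟨j, hj⟩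
        exact ⟨j, hj ▸ hgU' 0, hmU.trans (le_add_self)⟩
      · push_neg at hmU
        have h1 : m U - ε < m U :=
          ENNReal.sub_lt_self (measure_ne_top m U) ((lt_of_le_of_lt (zero_le (a := ε)) hmU).ne') hε
        nth_rewrite 2 [hsup] at h1
        obtain ⟨n, hn⟩ := lt_iSup_iff.1 h1
        obtain ⟨j, hj⟩ : ∃ j, S j = g n := by
          have := hgT n; rw [hS] at this; obtain ⟨j, hj⟩ := this; exact ⟨j, hj⟩
        refine ⟨j, hj ▸ hgU' n, ?_⟩
        rw [hj]
        exact tsub_le_iff_right.1 hn.le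
  intro μ ν hμ hν
  have bdd2 : BddAbove (Set.range fun n : ℕ => |(μ (S n)).toReal - (ν (S n)).toReal|) :=
    ⟨1, by rintro x ⟨n, rfl⟩; exact tv_abs_le_one μ ν (S n)⟩
  apply le_antisymm
  · apply ciSup_le
    rintro ⟨B, hB⟩
    apply le_of_forall_pos_le_add
    intro ε hε
    set m : Measure E := μ + ν with hm
    have hεq : ENNReal.ofReal (ε/4) ≠ 0 := by
      simp only [ne_eq, ENNReal.ofReal_eq_zero, not_le]; linarith
    obtain ⟨U, hBU, hUopen, hUlt⟩ := Set.exists_isOpen_lt_add B (measure_ne_top m B) hεq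
    have hUB : m (U \ B) ≤ ENNReal.ofReal (ε/4) := by
      rw [measure_diff hBU hB.nullMeasurableSet (measure_ne_top m B)]
      exact tsub_le_iff_left.2 hUlt.le
    obtain ⟨n, hnU, hUS⟩ := approx_open m inferInstance U hUopen (ENNReal.ofReal (ε/4)) hεq
    have hUSn : m (U \ S n) ≤ ENNReal.ofReal (ε/4) := by
      rw [measure_diff hnU (hSmeas n).nullMeasurableSet (measure_ne_top m _)]
      exact tsub_le_iff_left.2 hUS
    have claim : ∀ ρ : Measure E, (∀ s, ρ s ≤ m s) → IsFiniteMeasure ρ →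
        |(ρ B).toReal - (ρ (S n)).toReal| ≤ ε/4 + ε/4 := by
      intro ρ hρm _
      have key : ∀ (s t w : Set E), s ⊆ U → (s \ t ⊆ U \ w) → m (U \ w) ≤ ENNReal.ofReal (ε/4) →
          (ρ s).toReal ≤ (ρ t).toReal + ε/4 := by
        intro s t w _ hst hmw
        have h1 : ρ s ≤ ρ t + ENNReal.ofReal (ε/4) := by
          calc ρ s ≤ ρ (s ∩ t) + ρ (s \ t) := measure_le_inter_add_diff ρ s t
            _ ≤ ρ t + m (U \ w) :=
                add_le_add (measure_mono Set.inter_subset_right)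
                  (le_trans (measure_mono hst) (hρm _))
            _ ≤ ρ t + ENNReal.ofReal (ε/4) := by gcongr
        calc (ρ s).toReal ≤ (ρ t + ENNReal.ofReal (ε/4)).toReal :=
              ENNReal.toReal_mono (by simp [ENNReal.add_ne_top, measure_ne_top]) h1
          _ = (ρ t).toReal + ε/4 := by
              rw [ENNReal.toReal_add (measure_ne_top ρ _) (by simp),
                ENNReal.toReal_ofReal (by linarith)]
      have hBS : (ρ B).toReal ≤ (ρ (S n)).toReal + ε/4 :=
        key B (S n) (S n) hBU (Set.diff_subset_diff_left hBU) hUSn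
      have hSB : (ρ (S n)).toReal ≤ (ρ B).toReal + ε/4 :=
        key (S n) B B hnU (Set.diff_subset_diff_left hnU) hUB
      rw [abs_sub_le_iff]; constructor <;> linarith
    have hμc := claim μ (fun s => by simp [hm, Measure.add_apply]) inferInstance
    have hνc := claim ν (fun s => by simp [hm, Measure.add_apply]) inferInstance
    have habs : |(μ B).toReal - (ν B).toReal| ≤
        |(μ (S n)).toReal - (ν (S n)).toReal| + ε := by
      rw [abs_le] at hμc hνc ⊢
      constructor <;>
        · obtain ⟨a1, a2⟩ := hμc; obtain ⟨b1, b2⟩ := hνc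
          cases' abs_cases ((μ (S n)).toReal - (ν (S n)).toReal) with h h <;>
            rw [h.1] <;> linarith
    exact habs.trans (by gcongr; exact le_ciSup bdd2 n)
  · exact ciSup_le fun n => le_tvDist μ ν (hSmeas n)

lemma measurable_tvDist (κ η : Kernel E E) [IsMarkovKernel κ] [IsMarkovKernel η] :
    Measurable (fun y => tvDist (κ y) (η y)) := by
  obtain ⟨S, hSmeas, hSeq⟩ := exists_tv_seq (E := E)
  have heq : (fun y => tvDist (κ y) (η y)) =
      fun y => ⨆ n, |((κ y) (S n)).toReal - ((η y) (S n)).toReal| :=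
    funext fun y => hSeq _ _ inferInstance inferInstance
  rw [heq]
  exact Measurable.iSup fun n =>
    ((Kernel.measurable_coe κ (hSmeas n)).ennreal_toReal.sub
      (Kernel.measurable_coe η (hSmeas n)).ennreal_toReal).abs

lemma tv_kIter_tendsto (Qn : ℕ → Kernel E E) (Q : Kernel E E)
    [∀ n, IsMarkovKernel (Qn n)] [IsMarkovKernel Q]
    (htv : ∀ x, Tendsto (fun n => tvDist (Qn n x) (Q x)) atTop (nhds 0)) (k : ℕ) :
    ∀ y, Tendsto (fun n => tvDist (kIter (Qn n) k y) (kIter Q k y)) atTop (nhds 0) := by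
  induction k with
  | zero =>
    intro y
    have heq : (fun n => tvDist (kIter (Qn n) 0 y) (kIter Q 0 y)) = fun _ => (0:ℝ) := by
      funext n
      show tvDist (Kernel.id y) (Kernel.id y) = 0
      exact tvDist_self _
    rw [heq]
    exact tendsto_const_nhds
  | succ k ih =>
    intro y
    apply squeeze_zero (fun n => tvDist_nonneg _ _)
      (g := fun n => (∫ z, tvDist (kIter (Qn n) k z) (kIter Q k z) ∂(Q y)) +
        tvDist (Qn n y) (Q y))
    · intro n
      apply tvDist_le
      intro B hB
      set f : E → ℝ := fun z => ((kIter (Qn n) k) z B).toReal with hfdef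
      set gg : E → ℝ := fun z => ((kIter Q k) z B).toReal with hgdef
      have hfmeas : Measurable f := (Kernel.measurable_coe _ hB).ennreal_toReal
      have hgmeas : Measurable gg := (Kernel.measurable_coe _ hB).ennreal_toReal
      have hf0 : ∀ z, 0 ≤ f z := fun z => ENNReal.toReal_nonneg
      have hg0 : ∀ z, 0 ≤ gg z := fun z => ENNReal.toReal_nonneg
      have hf1 : ∀ z, f z ≤ 1 := fun z => by
        simpa using ENNReal.toReal_mono (by simp) (prob_le_one (μ := (kIter (Qn n) k) z) (s := B))
      have hg1 : ∀ z, gg z ≤ 1 := fun z => by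
        simpa using ENNReal.toReal_mono (by simp) (prob_le_one (μ := (kIter Q k) z) (s := B))
      rw [kIter_succ_toReal (Qn n) k y hB, kIter_succ_toReal Q k y hB]
      have triangle : |∫ z, f z ∂(Qn n y) - ∫ z, gg z ∂(Q y)| ≤
          |∫ z, f z ∂(Qn n y) - ∫ z, f z ∂(Q y)| + |∫ z, f z ∂(Q y) - ∫ z, gg z ∂(Q y)| :=
        abs_sub_le _ _ _
      have first : |∫ z, f z ∂(Qn n y) - ∫ z, f z ∂(Q y)| ≤ tvDist (Qn n y) (Q y) :=
        abs_integral_sub_le_tvDist _ _ hfmeas hf0 hf1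
      have second : |∫ z, f z ∂(Q y) - ∫ z, gg z ∂(Q y)| ≤
          ∫ z, tvDist (kIter (Qn n) k z) (kIter Q k z) ∂(Q y) := by
        have hi1 : Integrable f (Q y) := integrable_of_bdd _ hfmeas 1
          (fun z => by rw [abs_of_nonneg (hf0 z)]; exact hf1 z)
        have hi2 : Integrable gg (Q y) := integrable_of_bdd _ hgmeas 1
          (fun z => by rw [abs_of_nonneg (hg0 z)]; exact hg1 z)
        rw [← integral_sub hi1 hi2]
        calc |∫ z, (f z - gg z) ∂(Q y)| ≤ ∫ z, |f z - gg z| ∂(Q y) := by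
              simpa [Real.norm_eq_abs] using norm_integral_le_integral_norm (μ := Q y)
                (f := fun z => f z - gg z)
          _ ≤ ∫ z, tvDist (kIter (Qn n) k z) (kIter Q k z) ∂(Q y) := by
              apply integral_mono ((hi1.sub hi2).abs)
              · exact integrable_of_bdd _ (measurable_tvDist _ _) 1 (fun z => by
                  rw [abs_of_nonneg (tvDist_nonneg _ _)]; exact tvDist_le_one _ _)
              · intro z
                exact le_tvDist _ _ hB
      linarith
    · have h1 : Tendsto (fun n => ∫ z, tvDist (kIter (Qn n) k z) (kIter Q k z) ∂(Q y))
          atTop (nhds 0) := by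
        have hdc := tendsto_integral_of_dominated_convergence (μ := Q y)
          (F := fun n z => tvDist (kIter (Qn n) k z) (kIter Q k z)) (f := fun _ => (0:ℝ))
          (bound := fun _ => (1:ℝ))
          (fun n => (measurable_tvDist _ _).aestronglyMeasurable)
          (integrable_const 1)
          (fun n => ae_of_all _ fun z => by
            rw [Real.norm_eq_abs, abs_of_nonneg (tvDist_nonneg _ _)]
            exact tvDist_le_one _ _)
          (ae_of_all _ fun z => ih z)
        simpa using hdc
      simpa using h1.add (htv y)

end polish

/-- if `Q_n(x,·) → Q(x,·)` in total variation pointwise and the kernels are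
uniformly ergodic towards `π_n`, `π` with a common rate `Δ^k`, `Δ < 1`, then
`π_n → π` in total variation. -/
theorem stmt3 {E : Type*} [TopologicalSpace E] [PolishSpace E]
    [MeasurableSpace E] [BorelSpace E]
    (Qn : ℕ → Kernel E E) (Q : Kernel E E)
    [∀ n, IsMarkovKernel (Qn n)] [IsMarkovKernel Q]
    (htv : ∀ x, Tendsto (fun n => tvDist (Qn n x) (Q x)) atTop (nhds 0))
    (Δ : ℝ) (hΔ0 : 0 ≤ Δ) (hΔ1 : Δ < 1)
    (πn : ℕ → Measure E) (π : Measure E)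
    [∀ n, IsProbabilityMeasure (πn n)] [IsProbabilityMeasure π]
    (hergn : ∀ k : ℕ, 1 ≤ k → ∀ n : ℕ, ∀ x : E, tvDist (kIter (Qn n) k x) (πn n) ≤ Δ ^ k)
    (herg : ∀ k : ℕ, 1 ≤ k → ∀ x : E, tvDist (kIter Q k x) π ≤ Δ ^ k) :
    Tendsto (fun n => tvDist (πn n) π) atTop (nhds 0) := by
  rw [Metric.tendsto_atTop]
  intro ε hε
  have hpow := tendsto_pow_atTop_nhds_zero_of_lt_one hΔ0 hΔ1
  have hev : ∀ᶠ k in atTop, Δ ^ k < ε/4 := hpow.eventually (gt_mem_nhds (by linarith))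
  obtain ⟨k, hk1, hkε⟩ : ∃ k, 1 ≤ k ∧ Δ ^ k < ε/4 := by
    obtain ⟨k, hk⟩ := (hev.and (eventually_ge_atTop 1)).exists
    exact ⟨k, hk.2, hk.1⟩
  have hI : Tendsto (fun n => ∫ y, tvDist (kIter (Qn n) k y) (kIter Q k y) ∂π)
      atTop (nhds 0) := by
    have hdc := tendsto_integral_of_dominated_convergence (μ := π)
      (F := fun n y => tvDist (kIter (Qn n) k y) (kIter Q k y)) (f := fun _ => (0:ℝ))
      (bound := fun _ => (1:ℝ))
      (fun n => (measurable_tvDist _ _).aestronglyMeasurable)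
      (integrable_const 1)
      (fun n => ae_of_all _ fun y => by
        rw [Real.norm_eq_abs, abs_of_nonneg (tvDist_nonneg _ _)]
        exact tvDist_le_one _ _)
      (ae_of_all _ fun y => tv_kIter_tendsto Qn Q htv k y)
    simpa using hdc
  obtain ⟨N, hN⟩ := eventually_atTop.1 (hI.eventually (gt_mem_nhds (by linarith : (0:ℝ) < ε/4)))
  refine ⟨N, fun n hn => ?_⟩
  have hbound : tvDist (πn n) π ≤
      Δ^k + (∫ y, tvDist (kIter (Qn n) k y) (kIter Q k y) ∂π) + Δ^k := by
    apply tvDist_le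
    intro B hB
    set F : E → ℝ := fun y => ((kIter (Qn n) k) y B).toReal with hF
    set G : E → ℝ := fun y => ((kIter Q k) y B).toReal with hG
    have hFmeas : Measurable F := (Kernel.measurable_coe _ hB).ennreal_toReal
    have hGmeas : Measurable G := (Kernel.measurable_coe _ hB).ennreal_toReal
    have hF0 : ∀ y, 0 ≤ F y := fun y => ENNReal.toReal_nonneg
    have hG0 : ∀ y, 0 ≤ G y := fun y => ENNReal.toReal_nonneg
    have hF1 : ∀ y, F y ≤ 1 := fun y => by
      simpa using ENNReal.toReal_mono (by simp) (prob_le_one (μ := (kIter (Qn n) k) y) (s := B))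
    have hG1 : ∀ y, G y ≤ 1 := fun y => by
      simpa using ENNReal.toReal_mono (by simp) (prob_le_one (μ := (kIter Q k) y) (s := B))
    have hiF : Integrable F π := integrable_of_bdd _ hFmeas 1
      (fun y => by rw [abs_of_nonneg (hF0 y)]; exact hF1 y)
    have hiG : Integrable G π := integrable_of_bdd _ hGmeas 1
      (fun y => by rw [abs_of_nonneg (hG0 y)]; exact hG1 y)
    have t1 : |(πn n B).toReal - ∫ y, F y ∂π| ≤ Δ^k := by
      have hconst : (πn n B).toReal = ∫ _, (πn n B).toReal ∂π := by
        simp [integral_const, measure_univ]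
      rw [hconst, ← integral_sub (integrable_const _) hiF]
      calc |∫ y, ((πn n B).toReal - F y) ∂π| ≤ ∫ y, |(πn n B).toReal - F y| ∂π := by
            simpa [Real.norm_eq_abs] using norm_integral_le_integral_norm (μ := π)
              (f := fun y => (πn n B).toReal - F y)
        _ ≤ ∫ _, Δ^k ∂π := by
            apply integral_mono ((integrable_const _).sub hiF).abs (integrable_const _)
            intro y
            have := le_tvDist (πn n) ((kIter (Qn n) k) y) hB
            rw [tvDist_comm] at this
            exact this.trans (hergn k hk1 n y)
        _ = Δ^k := by simp [integral_const, measure_univ]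
    have t3 : |∫ y, G y ∂π - (π B).toReal| ≤ Δ^k := by
      have hconst : (π B).toReal = ∫ _, (π B).toReal ∂π := by
        simp [integral_const, measure_univ]
      rw [hconst, ← integral_sub hiG (integrable_const _)]
      calc |∫ y, (G y - (π B).toReal) ∂π| ≤ ∫ y, |G y - (π B).toReal| ∂π := by
            simpa [Real.norm_eq_abs] using norm_integral_le_integral_norm (μ := π)
              (f := fun y => G y - (π B).toReal)
        _ ≤ ∫ _, Δ^k ∂π := by
            apply integral_mono (hiG.sub (integrable_const _)).abs (integrable_const _)
            intro y
            exact (le_tvDist ((kIter Q k) y) π hB).trans (herg k hk1 y)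
        _ = Δ^k := by simp [integral_const, measure_univ]
    have t2 : |∫ y, F y ∂π - ∫ y, G y ∂π| ≤
        ∫ y, tvDist (kIter (Qn n) k y) (kIter Q k y) ∂π := by
      rw [← integral_sub hiF hiG]
      calc |∫ y, (F y - G y) ∂π| ≤ ∫ y, |F y - G y| ∂π := by
            simpa [Real.norm_eq_abs] using norm_integral_le_integral_norm (μ := π)
              (f := fun y => F y - G y)
        _ ≤ ∫ y, tvDist (kIter (Qn n) k y) (kIter Q k y) ∂π := by
            apply integral_mono (hiF.sub hiG).abs
            · exact integrable_of_bdd _ (measurable_tvDist _ _) 1 (fun y => by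
                rw [abs_of_nonneg (tvDist_nonneg _ _)]; exact tvDist_le_one _ _)
            · intro y
              exact le_tvDist _ _ hB
    have tri1 := abs_sub_le ((πn n B).toReal) (∫ y, F y ∂π) ((π B).toReal)
    have tri2 := abs_sub_le (∫ y, F y ∂π) (∫ y, G y ∂π) ((π B).toReal)
    linarith
  have hIn := hN n hn
  rw [Real.dist_eq, sub_zero, abs_of_nonneg (tvDist_nonneg _ _)]
  have hΔk : (0:ℝ) ≤ Δ^k := pow_nonneg hΔ0 k
  linarith
end

section
/- Let E be a Polish space with Borel σ-algebra 𝓔 and let Q be a Markov kernel on E with Doob coefficient Δ := sup_{x,x' ∈ E} sup_{B ∈ 𝓔} |Q(x,B) − Q(x',B)| < 1. Fix a bounded Borel measurable f : E → ℝ and α ∈ ℝ, α ≠ 0, and define the operator Ψ on bounded Borel measurable functions by Ψg(x) = f(x) + (1/α) ln ∫_E e^{α g(y)} Q(x,dy). Then Ψ is a local contraction in the span seminorm: for every M > 0 there exists γ ∈ [0,1) (depending only on α, M and Δ) such that whenever g_1, g_2 are bounded Borel measurable with ‖g_1‖_sp ≤ M and ‖g_2‖_sp ≤ M, one has ‖Ψg_1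 − Ψg_2‖_sp ≤ γ ‖g_1 − g_2‖_sp. -/
open MeasureTheory ProbabilityTheory Filter
open scoped ENNReal

/-- Doob (uniform ergodicity) coefficient of a kernel:
`Δ = sup_{x,x'} sup_B |Q(x,B) − Q(x',B)|`. -/
noncomputable def doobCoeff {E : Type*} [MeasurableSpace E] (Q : Kernel E E) : ℝ :=
  ⨆ p : E × E, tvDist (Q p.1) (Q p.2)

/-- Span seminorm `‖g‖_sp = sup g − inf g`. -/
noncomputable def spanSemi {E : Type*} (g : E → ℝ) : ℝ := (⨆ x, g x) - (⨅ x, g x)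

/-- The risk-sensitive operator `Ψg(x) = f(x) + (1/α) ln ∫ e^{α g(y)} Q(x,dy)`. -/
noncomputable def PsiOp {E : Type*} [MeasurableSpace E] (Q : Kernel E E)
    (f : E → ℝ) (α : ℝ) (g : E → ℝ) : E → ℝ :=
  fun x => f x + (1 / α) * Real.log (∫ y, Real.exp (α * g y) ∂ (Q x))

open scoped NNReal

section AuxStmt5

variable {X : Type*} {E : Type*} [MeasurableSpace E]

private lemma integrable_of_bdd' {P : Measure E} [IsFiniteMeasure P] {h : E → ℝ} {C : ℝ}
    (hm : Measurable h) (hb : ∀ y, |h y| ≤ C) : Integrable h P :=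
  ⟨hm.aestronglyMeasurable, HasFiniteIntegral.of_bounded (C := C) (Filter.Eventually.of_forall hb)⟩

private lemma prob_toReal_add_compl {P : Measure E} [IsProbabilityMeasure P] {B : Set E}
    (hB : MeasurableSet B) : (P B).toReal + (P Bᶜ).toReal = 1 := by
  rw [← ENNReal.toReal_add (measure_ne_top _ _) (measure_ne_top _ _),
    measure_add_measure_compl hB, measure_univ, ENNReal.toReal_one]

private lemma layer_antitone (P : Measure E) [IsProbabilityMeasure P] (h : E → ℝ) :
    Antitone (fun t => (P {y | t < h y}).toReal) := fun _ _ hst =>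
  ENNReal.toReal_mono (measure_ne_top _ _) (measure_mono (fun _ hy => lt_of_le_of_lt hst hy))

private lemma layer_le_one (P : Measure E) [IsProbabilityMeasure P] (h : E → ℝ) (t : ℝ) :
    (P {y | t < h y}).toReal ≤ 1 :=
  ENNReal.toReal_le_of_le_ofReal zero_le_one (by simpa using prob_le_one)

private lemma layer_zero (P : Measure E) (h : E → ℝ) {R t : ℝ} (hRb : ∀ y, h y ≤ R)
    (ht : R < t) : (P {y | t < h y}).toReal = 0 := by
  have : {y | t < h y} = ∅ := by
    ext y; simp only [Set.mem_setOf_eq, Set.mem_empty_iff_false, iff_false, not_lt]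
    exact (hRb y).trans ht.le
  simp [this]

private lemma indicator_Ioc_integrable {R c : ℝ} :
    Integrable ((Set.Ioc (0:ℝ) R).indicator (fun _ => (c:ℝ)))
      (volume.restrict (Set.Ioi (0:ℝ))) := by
  refine ((integrable_indicator_iff measurableSet_Ioc).2 ?_).integrableOn
  exact (integrableOn_const_iff).2 (Or.inr (by simp [Real.volume_Ioc]))

private lemma layer_integrable (P : Measure E) [IsProbabilityMeasure P] {h : E → ℝ} {R : ℝ}
    (hR : 0 ≤ R) (hRb : ∀ y, h y ≤ R) :
    Integrable (fun t => (P {y | t < h y}).toReal) (volume.restrict (Set.Ioi (0:ℝ))) := by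
  refine (indicator_Ioc_integrable (R := R) (c := 1)).mono'
    ((layer_antitone P h).measurable.aestronglyMeasurable) ?_
  rw [ae_restrict_iff' measurableSet_Ioi]
  refine Filter.Eventually.of_forall (fun t ht => ?_)
  rw [Real.norm_eq_abs, abs_of_nonneg ENNReal.toReal_nonneg]
  by_cases htR : t ≤ R
  · rw [Set.indicator_of_mem (Set.mem_Ioc.2 ⟨ht, htR⟩)]
    exact layer_le_one P h t
  · rw [layer_zero P h hRb (not_le.1 htR)]
    exact Set.indicator_nonneg (by intro _ _; norm_num) t

/-- Comparison of integrals of a nonnegative bounded function against two probability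
measures whose total-variation distance is at most `c`. -/
private lemma integral_le_of_meas_le {P₁ P₂ : Measure E} [IsProbabilityMeasure P₁]
    [IsProbabilityMeasure P₂] {h : E → ℝ} (hm : Measurable h) {R c : ℝ}
    (hc : 0 ≤ c) (hR : 0 ≤ R) (h0 : ∀ y, 0 ≤ h y) (hRb : ∀ y, h y ≤ R)
    (hTV : ∀ B : Set E, MeasurableSet B → (P₁ B).toReal ≤ (P₂ B).toReal + c) :
    ∫ y, h y ∂P₁ ≤ (∫ y, h y ∂P₂) + c * R := by
  have habs : ∀ y, |h y| ≤ R := fun y => abs_le.2 ⟨by linarith [h0 y], hRb y⟩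
  have hint1 : Integrable h P₁ := integrable_of_bdd' hm habs
  have hint2 : Integrable h P₂ := integrable_of_bdd' hm habs
  rw [hint1.integral_eq_integral_meas_lt (Filter.Eventually.of_forall h0),
    hint2.integral_eq_integral_meas_lt (Filter.Eventually.of_forall h0)]
  have hGint : Integrable ((Set.Ioc (0:ℝ) R).indicator (fun _ => (c:ℝ)))
      (volume.restrict (Set.Ioi (0:ℝ))) := indicator_Ioc_integrable
  have hmono : ∫ t in Set.Ioi (0:ℝ), (P₁ {a | t < h a}).toReal
      ≤ ∫ t in Set.Ioi (0:ℝ),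
        ((P₂ {a | t < h a}).toReal + (Set.Ioc (0:ℝ) R).indicator (fun _ => (c:ℝ)) t) := by
    refine setIntegral_mono_on (layer_integrable P₁ hR hRb)
      ((layer_integrable P₂ hR hRb).add hGint) measurableSet_Ioi ?_
    intro t ht
    by_cases htR : t ≤ R
    · rw [Set.indicator_of_mem (Set.mem_Ioc.2 ⟨ht, htR⟩)]
      exact hTV _ (measurableSet_lt measurable_const hm)
    · rw [Set.indicator_of_notMem (fun hmem => htR hmem.2),
        layer_zero P₁ h hRb (not_le.1 htR), add_zero]
      exact ENNReal.toReal_nonneg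
  have hGval : ∫ t in Set.Ioi (0:ℝ), (Set.Ioc (0:ℝ) R).indicator (fun _ => (c:ℝ)) t = c * R := by
    rw [setIntegral_indicator measurableSet_Ioc,
      Set.inter_eq_self_of_subset_right Set.Ioc_subset_Ioi_self, setIntegral_const,
      Real.volume_real_Ioc_of_le hR, smul_eq_mul, sub_zero, mul_comm]
  calc ∫ t in Set.Ioi (0:ℝ), (P₁ {a | t < h a}).toReal
      ≤ ∫ t in Set.Ioi (0:ℝ),
        ((P₂ {a | t < h a}).toReal + (Set.Ioc (0:ℝ) R).indicator (fun _ => (c:ℝ)) t) := hmono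
    _ = (∫ t in Set.Ioi (0:ℝ), (P₂ {a | t < h a}).toReal) + c * R := by
        rw [integral_add (layer_integrable P₂ hR hRb) hGint, hGval]

private lemma one_le_integral_exp {P : Measure E} [IsProbabilityMeasure P] {v : E → ℝ} {S : ℝ}
    (hm : Measurable v) (h0 : ∀ y, 0 ≤ v y) (hS : ∀ y, v y ≤ S) :
    1 ≤ ∫ y, Real.exp (v y) ∂P := by
  have hb : ∀ y, |Real.exp (v y)| ≤ Real.exp S := fun y => by
    rw [abs_of_pos (Real.exp_pos _)]; exact Real.exp_le_exp.2 (hS y)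
  calc (1:ℝ) = ∫ _, (1:ℝ) ∂P := by simp
    _ ≤ ∫ y, Real.exp (v y) ∂P := by
        refine integral_mono (integrable_const 1) (integrable_of_bdd' hm.exp hb) (fun y => ?_)
        simpa using Real.one_le_exp (h0 y)

private lemma log_ratio_le {μ ν : Measure E} [IsProbabilityMeasure μ] [IsProbabilityMeasure ν]
    {v : E → ℝ} (hm : Measurable v) {S c : ℝ} (hc : 0 ≤ c) (hS0 : 0 ≤ S)
    (h0 : ∀ y, 0 ≤ v y) (hS : ∀ y, v y ≤ S)
    (hTV : ∀ B : Set E, MeasurableSet B → (μ B).toReal ≤ (ν B).toReal + c) :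
    Real.log (∫ y, Real.exp (v y) ∂μ) - Real.log (∫ y, Real.exp (v y) ∂ν)
      ≤ Real.log (1 + c * (Real.exp S - 1)) := by
  set A := ∫ y, Real.exp (v y) ∂μ with hA
  set B := ∫ y, Real.exp (v y) ∂ν with hB
  have hA1 : 1 ≤ A := one_le_integral_exp hm h0 hS
  have hB1 : 1 ≤ B := one_le_integral_exp hm h0 hS
  have hR0 : 0 ≤ Real.exp S - 1 := by linarith [Real.one_le_exp hS0]
  have hexpb : ∀ y, |Real.exp (v y)| ≤ Real.exp S := fun y => by
    rw [abs_of_pos (Real.exp_pos _)]; exact Real.exp_le_exp.2 (hS y)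
  have hintμ : Integrable (fun y => Real.exp (v y)) μ := integrable_of_bdd' hm.exp hexpb
  have hintν : Integrable (fun y => Real.exp (v y)) ν := integrable_of_bdd' hm.exp hexpb
  have key : A - 1 ≤ (B - 1) + c * (Real.exp S - 1) := by
    have h2 := integral_le_of_meas_le (P₁ := μ) (P₂ := ν)
      (h := fun y => Real.exp (v y) - 1) (hm.exp.sub measurable_const) hc hR0
      (fun y => by simpa using Real.one_le_exp (h0 y))
      (fun y => by simp only [tsub_le_iff_right, sub_add_cancel]; exact Real.exp_le_exp.2 (hS y))
      hTV
    simp only [integral_sub hintμ (integrable_const 1), integral_sub hintν (integrable_const 1),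
      integral_const, measure_univ, probReal_univ, one_smul, smul_eq_mul, mul_one] at h2
    exact h2
  have hAB : A ≤ B * (1 + c * (Real.exp S - 1)) := by
    nlinarith [mul_le_mul_of_nonneg_right hB1 (mul_nonneg hc hR0)]
  calc Real.log A - Real.log B ≤ Real.log (B * (1 + c * (Real.exp S - 1))) - Real.log B := by
        have := Real.log_le_log (by linarith) hAB
        linarith
    _ = Real.log (1 + c * (Real.exp S - 1)) := by
        rw [Real.log_mul (by linarith) (by nlinarith)]; ring

/-- Tilted probability measure with all the facts we need. -/
private lemma tilt_facts (P : Measure E) [IsProbabilityMeasure P] {φ : E → ℝ} (hφ : Measurable φ)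
    {L U : ℝ} (hL : ∀ y, L ≤ φ y) (hU : ∀ y, φ y ≤ U) :
    ∃ μ : Measure E, IsProbabilityMeasure μ ∧
      (∀ B : Set E, MeasurableSet B → Real.exp (L - U) * (P B).toReal ≤ (μ B).toReal) ∧
      (∀ (h : E → ℝ) (C : ℝ), Measurable h → (∀ y, |h y| ≤ C) →
        ∫ y, h y ∂μ
          = (∫ y, h y * Real.exp (φ y) ∂P) / (∫ y, Real.exp (φ y) ∂P)) := by
  set Z := ∫ y, Real.exp (φ y) ∂P with hZ
  have hexpb : ∀ y, |Real.exp (φ y)| ≤ Real.exp U := fun y => by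
    rw [abs_of_pos (Real.exp_pos _)]; exact Real.exp_le_exp.2 (hU y)
  have hint : Integrable (fun y => Real.exp (φ y)) P := integrable_of_bdd' hφ.exp hexpb
  have hZL : Real.exp L ≤ Z := by
    have := integral_mono (integrable_const (Real.exp L)) hint (fun y => Real.exp_le_exp.2 (hL y))
    simpa using this
  have hZU : Z ≤ Real.exp U := by
    have := integral_mono hint (integrable_const (Real.exp U)) (fun y => Real.exp_le_exp.2 (hU y))
    simpa using this
  have hZ0 : 0 < Z := lt_of_lt_of_le (Real.exp_pos L) hZL
  set ρ : E → ℝ≥0 := fun y => Real.toNNReal (Real.exp (φ y) / Z) with hρ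
  have hρm : Measurable ρ := (hφ.exp.div_const Z).real_toNNReal
  have hρcoe : ∀ y, ((ρ y : ℝ≥0) : ℝ) = Real.exp (φ y) / Z := fun y =>
    Real.coe_toNNReal _ (div_nonneg (Real.exp_pos _).le hZ0.le)
  set μ : Measure E := P.withDensity (fun y => ((ρ y : ℝ≥0) : ℝ≥0∞)) with hμ
  haveI hμprob : IsProbabilityMeasure μ := by
    constructor
    rw [hμ, withDensity_apply _ MeasurableSet.univ, Measure.restrict_univ,
      lintegral_coe_eq_integral ρ]
    · have h1 : ∫ y, ((ρ y : ℝ≥0) : ℝ) ∂P = 1 := by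
        rw [integral_congr_ae (Filter.Eventually.of_forall hρcoe), integral_div, ← hZ,
          div_self hZ0.ne']
      rw [h1, ENNReal.ofReal_one]
    · refine integrable_of_bdd' (C := Real.exp U / Z) hρm.coe_nnreal_real (fun y => ?_)
      rw [hρcoe y, abs_of_nonneg (div_nonneg (Real.exp_pos _).le hZ0.le)]
      exact (div_le_div_iff_of_pos_right hZ0).2 (Real.exp_le_exp.2 (hU y))
  refine ⟨μ, hμprob, ?_, ?_⟩
  · intro B hB
    have hlow : ∀ y, ENNReal.ofReal (Real.exp (L - U)) ≤ ((ρ y : ℝ≥0) : ℝ≥0∞) := by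
      intro y
      have h1 : Real.exp (L - U) ≤ Real.exp (φ y) / Z := by
        rw [Real.exp_sub, div_le_div_iff₀ (Real.exp_pos _) hZ0]
        exact mul_le_mul (Real.exp_le_exp.2 (hL y)) hZU hZ0.le (Real.exp_pos _).le
      calc ENNReal.ofReal (Real.exp (L - U)) ≤ ENNReal.ofReal (Real.exp (φ y) / Z) :=
            ENNReal.ofReal_le_ofReal h1
        _ = ((ρ y : ℝ≥0) : ℝ≥0∞) := rfl
    have hμB : ENNReal.ofReal (Real.exp (L - U)) * P B ≤ μ B := by
      rw [hμ, withDensity_apply _ hB]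
      calc ENNReal.ofReal (Real.exp (L - U)) * P B
          = ∫⁻ _ in B, ENNReal.ofReal (Real.exp (L - U)) ∂P := by rw [setLIntegral_const]
        _ ≤ ∫⁻ y in B, ((ρ y : ℝ≥0) : ℝ≥0∞) ∂P := lintegral_mono (fun y => hlow y)
    have := ENNReal.toReal_mono (measure_ne_top μ B) hμB
    rwa [ENNReal.toReal_mul, ENNReal.toReal_ofReal (Real.exp_pos _).le] at this
  · intro h C hhm hhb
    rw [hμ, integral_withDensity_eq_integral_smul hρm h]
    have : ∀ y, (ρ y) • h y = (h y * Real.exp (φ y)) / Z := by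
      intro y
      rw [NNReal.smul_def, smul_eq_mul, hρcoe y]
      ring
    rw [integral_congr_ae (Filter.Eventually.of_forall this), integral_div]

private lemma tilt_tv {P₁ P₂ μ ν : Measure E} [IsProbabilityMeasure P₁] [IsProbabilityMeasure P₂]
    [IsProbabilityMeasure μ] [IsProbabilityMeasure ν] {ε Δ : ℝ} (hε0 : 0 ≤ ε)
    (h₁ : ∀ B : Set E, MeasurableSet B → ε * (P₁ B).toReal ≤ (μ B).toReal)
    (h₂ : ∀ B : Set E, MeasurableSet B → ε * (P₂ B).toReal ≤ (ν B).toReal)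
    (hP : ∀ B : Set E, MeasurableSet B → (P₂ B).toReal ≤ (P₁ B).toReal + Δ) :
    ∀ B : Set E, MeasurableSet B → (μ B).toReal ≤ (ν B).toReal + (1 - ε * (1 - Δ)) := by
  intro B hB
  have hμc := h₁ Bᶜ hB.compl
  have hνB := h₂ B hB
  have hPc := hP Bᶜ hB.compl
  have e1 := prob_toReal_add_compl (P := μ) hB
  have e2 := prob_toReal_add_compl (P := P₂) hB
  nlinarith [hμc, hνB, hPc, e1, e2]

/-- The scalar convexity inequality via two-point Hölder / AM-GM. -/
private lemma log_interp_bound {g t T : ℝ} (hg0 : 0 ≤ g) (hg1 : g < 1) (ht0 : 0 ≤ t) (htT : t ≤ T)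
    (hT : 0 < T) :
    Real.log (1 + g * (Real.exp t - 1)) ≤ (t / T) * Real.log (1 + g * (Real.exp T - 1)) := by
  rcases eq_or_lt_of_le ht0 with h0 | h0
  · rw [← h0]; simp
  rcases eq_or_lt_of_le hg0 with hg | hg
  · rw [← hg]
    simp [mul_nonneg (div_nonneg ht0 hT.le)]
  set lam := t / T with hlam
  have hlam0 : 0 < lam := div_pos h0 hT
  have hlam1 : lam ≤ 1 := (div_le_one hT).2 htT
  set C := 1 + g * (Real.exp T - 1) with hC
  have hC1 : 1 ≤ C := by nlinarith [Real.one_le_exp hT.le]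
  have hC0 : 0 < C := by linarith
  have hg1' : 0 < 1 - g := by linarith
  have het : (Real.exp T) ^ lam = Real.exp t := by
    rw [Real.rpow_def_of_pos (Real.exp_pos T), Real.log_exp, hlam]
    congr 1
    field_simp
  have hCsum : (1 - g) + g * Real.exp T = C := by rw [hC]; ring
  have hCLlam : 0 < C ^ lam := Real.rpow_pos_of_pos hC0 lam
  have ha := Real.geom_mean_le_arith_mean2_weighted hlam0.le (by linarith : (0:ℝ) ≤ 1 - lam)
    (div_nonneg hg1'.le hC0.le) hg1'.le (by ring : lam + (1 - lam) = 1)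
  have hb := Real.geom_mean_le_arith_mean2_weighted hlam0.le (by linarith : (0:ℝ) ≤ 1 - lam)
    (div_nonneg (mul_nonneg hg0 (Real.exp_pos T).le) hC0.le) hg0
    (by ring : lam + (1 - lam) = 1)
  have ea : ((1 - g) / C) ^ lam * (1 - g) ^ (1 - lam) = (1 - g) / C ^ lam := by
    rw [Real.div_rpow hg1'.le hC0.le, div_mul_eq_mul_div, ← Real.rpow_add hg1']
    norm_num
  have eb : ((g * Real.exp T) / C) ^ lam * g ^ (1 - lam)
      = g * (Real.exp T) ^ lam / C ^ lam := by
    rw [Real.div_rpow (mul_nonneg hg0 (Real.exp_pos T).le) hC0.le,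
      Real.mul_rpow hg0 (Real.exp_pos T).le, div_mul_eq_mul_div]
    rw [show g ^ lam * Real.exp T ^ lam * g ^ (1 - lam)
        = g ^ lam * g ^ (1 - lam) * Real.exp T ^ lam by ring, ← Real.rpow_add hg]
    norm_num
  have hsum : ((1 - g) + g * (Real.exp T) ^ lam) / C ^ lam ≤ 1 := by
    have := add_le_add ha hb
    rw [ea, eb] at this
    calc ((1 - g) + g * (Real.exp T) ^ lam) / C ^ lam
        = (1 - g) / C ^ lam + g * (Real.exp T) ^ lam / C ^ lam := by ring
      _ ≤ (lam * ((1 - g) / C) + (1 - lam) * (1 - g))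
          + (lam * (g * Real.exp T / C) + (1 - lam) * g) := this
      _ = lam * (((1 - g) + g * Real.exp T) / C) + (1 - lam) := by ring
      _ = 1 := by rw [hCsum, div_self hC0.ne']; ring
  have hmain : 1 + g * (Real.exp t - 1) ≤ C ^ lam := by
    have h1 : (1 - g) + g * (Real.exp T) ^ lam ≤ C ^ lam := by
      rwa [div_le_one hCLlam] at hsum
    rw [het] at h1
    linarith [h1]
  calc Real.log (1 + g * (Real.exp t - 1)) ≤ Real.log (C ^ lam) := by
        apply Real.log_le_log _ hmain
        nlinarith [Real.one_le_exp ht0]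
    _ = lam * Real.log C := Real.log_rpow hC0 lam

private lemma prob_toReal_le_one {P : Measure E} [IsProbabilityMeasure P] (B : Set E) :
    (P B).toReal ≤ 1 :=
  ENNReal.toReal_le_of_le_ofReal zero_le_one (by simpa using prob_le_one)

private lemma abs_tv_term_le_one {P₁ P₂ : Measure E} [IsProbabilityMeasure P₁]
    [IsProbabilityMeasure P₂] (B : Set E) : |(P₁ B).toReal - (P₂ B).toReal| ≤ 1 := by
  have a1 := prob_toReal_le_one (P := P₁) B
  have a2 := prob_toReal_le_one (P := P₂) B
  have b1 : (0:ℝ) ≤ (P₁ B).toReal := ENNReal.toReal_nonneg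
  have b2 : (0:ℝ) ≤ (P₂ B).toReal := ENNReal.toReal_nonneg
  exact abs_le.2 ⟨by linarith, by linarith⟩

private lemma tvDist_le_one_s5 {P₁ P₂ : Measure E} [IsProbabilityMeasure P₁]
    [IsProbabilityMeasure P₂] : tvDist P₁ P₂ ≤ 1 :=
  ciSup_le (fun B => abs_tv_term_le_one B.1)

private lemma abs_le_tvDist {P₁ P₂ : Measure E} [IsProbabilityMeasure P₁]
    [IsProbabilityMeasure P₂] {B : Set E} (hB : MeasurableSet B) :
    |(P₁ B).toReal - (P₂ B).toReal| ≤ tvDist P₁ P₂ :=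
  le_ciSup (f := fun B : {B : Set E // MeasurableSet B} => |(P₁ B.1).toReal - (P₂ B.1).toReal|)
    ⟨1, by rintro _ ⟨B', rfl⟩; exact abs_tv_term_le_one B'.1⟩ ⟨B, hB⟩

private lemma tvDist_le_doobCoeff {Q : Kernel E E} [IsMarkovKernel Q] (x x' : E) :
    tvDist (Q x) (Q x') ≤ doobCoeff Q :=
  le_ciSup (f := fun p : E × E => tvDist (Q p.1) (Q p.2))
    ⟨1, by rintro _ ⟨p, rfl⟩; exact tvDist_le_one_s5⟩ (x, x')

private lemma doobCoeff_nonneg {Q : Kernel E E} [IsMarkovKernel Q] : 0 ≤ doobCoeff Q :=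
  Real.iSup_nonneg (fun _ => Real.iSup_nonneg (fun _ => abs_nonneg _))

private lemma spanSemi_le_of_forall [Nonempty X] {D : X → ℝ} {K : ℝ}
    (h : ∀ x x', D x - D x' ≤ K) : spanSemi D ≤ K := by
  rw [spanSemi, sub_le_iff_le_add]
  refine ciSup_le (fun x => ?_)
  rw [add_comm, ← sub_le_iff_le_add]
  exact le_ciInf (fun x' => by linarith [h x x'])

private lemma sub_le_spanSemi {u : X → ℝ} {C : ℝ} (hb : ∀ y, |u y| ≤ C) (y y' : X) :
    u y - u y' ≤ spanSemi u := by
  have h1 : u y ≤ ⨆ z, u z :=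
    le_ciSup ⟨C, by rintro _ ⟨z, rfl⟩; exact (abs_le.1 (hb z)).2⟩ y
  have h2 : ⨅ z, u z ≤ u y' :=
    ciInf_le ⟨-C, by rintro _ ⟨z, rfl⟩; exact (abs_le.1 (hb z)).1⟩ y'
  rw [spanSemi]; linarith

private lemma spanSemi_nonneg {u : X → ℝ} {C : ℝ} [Nonempty X] (hb : ∀ y, |u y| ≤ C) :
    0 ≤ spanSemi u := by
  obtain ⟨y⟩ := (inferInstance : Nonempty X)
  linarith [sub_le_spanSemi hb y y]

private lemma spanSemi_sub_le [Nonempty X] {g₁ g₂ : X → ℝ} {C₁ C₂ : ℝ}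
    (hb₁ : ∀ y, |g₁ y| ≤ C₁) (hb₂ : ∀ y, |g₂ y| ≤ C₂) :
    spanSemi (fun x => g₁ x - g₂ x) ≤ spanSemi g₁ + spanSemi g₂ := by
  refine spanSemi_le_of_forall (fun x x' => ?_)
  have := sub_le_spanSemi hb₁ x x'
  have := sub_le_spanSemi hb₂ x' x
  linarith

private lemma integral_exp_pos' {P : Measure E} [IsProbabilityMeasure P] {w : E → ℝ} {Cw : ℝ}
    (hm : Measurable w) (hb : ∀ y, |w y| ≤ Cw) : 0 < ∫ y, Real.exp (w y) ∂P := by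
  have hexpb : ∀ y, |Real.exp (w y)| ≤ Real.exp Cw := fun y => by
    rw [abs_of_pos (Real.exp_pos _)]; exact Real.exp_le_exp.2 (abs_le.1 (hb y)).2
  have h1 : Real.exp (-Cw) ≤ ∫ y, Real.exp (w y) ∂P := by
    have := integral_mono (μ := P) (integrable_const (Real.exp (-Cw)))
      (integrable_of_bdd' hm.exp hexpb) (fun y => Real.exp_le_exp.2 (abs_le.1 (hb y)).1)
    simpa using this
  exact lt_of_lt_of_le (Real.exp_pos _) h1

end AuxStmt5

set_option maxHeartbeats 1000000 in
/-- Theorem 2, local contraction: under `Δ < 1`, `Ψ` is a local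
contraction in the span seminorm on bounded Borel functions. -/
theorem stmt5 {E : Type*} [TopologicalSpace E] [PolishSpace E]
    [MeasurableSpace E] [BorelSpace E]
    (Q : Kernel E E) [IsMarkovKernel Q]
    (hDoob : doobCoeff Q < 1)
    (f : E → ℝ) (hf : Measurable f) (hfb : ∃ C, ∀ x, |f x| ≤ C)
    (α : ℝ) (hα : α ≠ 0) :
    ∀ M : ℝ, 0 < M → ∃ γ : ℝ, 0 ≤ γ ∧ γ < 1 ∧
      ∀ g₁ g₂ : E → ℝ, Measurable g₁ → Measurable g₂ →
        (∃ C, ∀ x, |g₁ x| ≤ C) → (∃ C, ∀ x, |g₂ x| ≤ C) →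
        spanSemi g₁ ≤ M → spanSemi g₂ ≤ M →
        spanSemi (fun x => PsiOp Q f α g₁ x - PsiOp Q f α g₂ x) ≤
          γ * spanSemi (fun x => g₁ x - g₂ x) := by
  intro M hM
  have hβ : 0 < |α| := abs_pos.2 hα
  set β := |α| with hβdef
  set Δ := doobCoeff Q with hΔdef
  have hΔ0 : 0 ≤ Δ := doobCoeff_nonneg
  have hΔ1 : Δ < 1 := hDoob
  set ε := Real.exp (-(β * M)) with hεdef
  have hε0 : 0 < ε := Real.exp_pos _
  have hε1 : ε ≤ 1 := Real.exp_le_one_iff.2 (by nlinarith)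
  set g0 := 1 - ε * (1 - Δ) with hg0def
  have hg00 : 0 ≤ g0 := by nlinarith
  have hg01 : g0 < 1 := by nlinarith
  set T := β * (2 * M) with hTdef
  have hT : 0 < T := by positivity
  set C := 1 + g0 * (Real.exp T - 1) with hCdef
  have hC1 : 1 ≤ C := by nlinarith [Real.one_le_exp hT.le]
  refine ⟨Real.log C / T, div_nonneg (Real.log_nonneg hC1) hT.le, ?_, ?_⟩
  · rw [div_lt_one hT]
    have hexpT : 1 < Real.exp T := by nlinarith [Real.add_one_lt_exp hT.ne']
    have hCe : C < Real.exp T := by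
      have hp : 0 < (1 - g0) * (Real.exp T - 1) := mul_pos (by linarith) (by linarith)
      nlinarith [hp]
    have := Real.log_lt_log (by linarith : (0:ℝ) < C) hCe
    rwa [Real.log_exp] at this
  · intro g₁ g₂ hm₁ hm₂ hb₁ hb₂ hs₁ hs₂
    rcases isEmpty_or_nonempty E with hE | hE
    · simp [spanSemi, Real.iSup_of_isEmpty, Real.iInf_of_isEmpty]
    obtain ⟨C₁, hC₁⟩ := hb₁
    obtain ⟨C₂, hC₂⟩ := hb₂
    set u := fun x => g₁ x - g₂ x with hu
    have hbu : ∀ y, |u y| ≤ C₁ + C₂ := fun y =>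
      (abs_sub (g₁ y) (g₂ y)).trans (add_le_add (hC₁ y) (hC₂ y))
    set S := spanSemi u with hSdef
    have hS0 : 0 ≤ S := spanSemi_nonneg hbu
    have hS2M : S ≤ 2 * M := le_trans (spanSemi_sub_le hC₁ hC₂) (by linarith)
    have hmu : Measurable u := hm₁.sub hm₂
    -- constants for the tilt
    obtain ⟨L, U, c, hLφ, hφU, hUL, hv0, hvS⟩ :
        ∃ L U c : ℝ, (∀ y, L ≤ α * g₂ y) ∧ (∀ y, α * g₂ y ≤ U) ∧ (U - L ≤ β * M) ∧
          (∀ y, 0 ≤ α * (u y - c)) ∧ (∀ y, α * (u y - c) ≤ β * S) := by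
      have hbdd2a : BddAbove (Set.range g₂) := ⟨C₂, by rintro _ ⟨z, rfl⟩; exact (abs_le.1 (hC₂ z)).2⟩
      have hbdd2b : BddBelow (Set.range g₂) := ⟨-C₂, by rintro _ ⟨z, rfl⟩; exact (abs_le.1 (hC₂ z)).1⟩
      have hbddua : BddAbove (Set.range u) := ⟨C₁ + C₂, by rintro _ ⟨z, rfl⟩; exact (abs_le.1 (hbu z)).2⟩
      have hbddub : BddBelow (Set.range u) := ⟨-(C₁ + C₂), by rintro _ ⟨z, rfl⟩; exact (abs_le.1 (hbu z)).1⟩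
      have hspan2 : (⨆ y, g₂ y) - (⨅ y, g₂ y) ≤ M := hs₂
      have hspanu : (⨆ y, u y) - (⨅ y, u y) = S := rfl
      rcases lt_or_gt_of_ne hα with hneg | hpos
      · refine ⟨α * (⨆ y, g₂ y), α * (⨅ y, g₂ y), ⨆ y, u y, ?_, ?_, ?_, ?_, ?_⟩
        · exact fun y => mul_le_mul_of_nonpos_left (le_ciSup hbdd2a y) hneg.le
        · exact fun y => mul_le_mul_of_nonpos_left (ciInf_le hbdd2b y) hneg.le
        · have : β = -α := abs_of_neg hneg
          rw [this]; nlinarith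
        · intro y
          have : u y ≤ ⨆ z, u z := le_ciSup hbddua y
          nlinarith
        · intro y
          have h1 : ⨅ z, u z ≤ u y := ciInf_le hbddub y
          have : β = -α := abs_of_neg hneg
          rw [this]; nlinarith
      · refine ⟨α * (⨅ y, g₂ y), α * (⨆ y, g₂ y), ⨅ y, u y, ?_, ?_, ?_, ?_, ?_⟩
        · exact fun y => mul_le_mul_of_nonneg_left (ciInf_le hbdd2b y) hpos.le
        · exact fun y => mul_le_mul_of_nonneg_left (le_ciSup hbdd2a y) hpos.le
        · have : β = α := abs_of_pos hpos
          rw [this]; nlinarith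
        · intro y
          have : ⨅ z, u z ≤ u y := ciInf_le hbddub y
          nlinarith
        · intro y
          have h1 : u y ≤ ⨆ z, u z := le_ciSup hbddua y
          have : β = α := abs_of_pos hpos
          rw [this]; nlinarith
    set φ := fun y => α * g₂ y with hφdef
    have hφm : Measurable φ := measurable_const.mul hm₂
    set v := fun y => α * (u y - c) with hvdef
    have hvm : Measurable v := measurable_const.mul (hmu.sub measurable_const)
    have hεLU : ε ≤ Real.exp (L - U) := Real.exp_le_exp.2 (by linarith)
    -- pointwise estimate
    refine spanSemi_le_of_forall (fun x x' => ?_)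
    obtain ⟨μ, hμP, hμlow, hμint⟩ := tilt_facts (Q x) hφm hLφ hφU
    obtain ⟨ν, hνP, hνlow, hνint⟩ := tilt_facts (Q x') hφm hLφ hφU
    haveI := hμP; haveI := hνP
    have hμlow' : ∀ B : Set E, MeasurableSet B → ε * ((Q x) B).toReal ≤ (μ B).toReal :=
      fun B hB => le_trans (mul_le_mul_of_nonneg_right hεLU ENNReal.toReal_nonneg) (hμlow B hB)
    have hνlow' : ∀ B : Set E, MeasurableSet B → ε * ((Q x') B).toReal ≤ (ν B).toReal :=
      fun B hB => le_trans (mul_le_mul_of_nonneg_right hεLU ENNReal.toReal_nonneg) (hνlow B hB)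
    have hQ1 : ∀ B : Set E, MeasurableSet B → ((Q x') B).toReal ≤ ((Q x) B).toReal + Δ := by
      intro B hB
      have := (abs_le.1 ((abs_le_tvDist (P₁ := Q x) (P₂ := Q x') hB).trans
        (tvDist_le_doobCoeff x x'))).1
      linarith
    have hQ2 : ∀ B : Set E, MeasurableSet B → ((Q x) B).toReal ≤ ((Q x') B).toReal + Δ := by
      intro B hB
      have := (abs_le.1 ((abs_le_tvDist (P₁ := Q x) (P₂ := Q x') hB).trans
        (tvDist_le_doobCoeff x x'))).2
      linarith
    have hTVμν : ∀ B : Set E, MeasurableSet B → (μ B).toReal ≤ (ν B).toReal + g0 :=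
      tilt_tv hε0.le hμlow' hνlow' hQ1
    have hTVνμ : ∀ B : Set E, MeasurableSet B → (ν B).toReal ≤ (μ B).toReal + g0 :=
      tilt_tv hε0.le hνlow' hμlow' hQ2
    -- integral identities
    have hexpvb : ∀ y, |Real.exp (v y)| ≤ Real.exp (β * S) := fun y => by
      rw [abs_of_pos (Real.exp_pos _)]; exact Real.exp_le_exp.2 (hvS y)
    set Iμ := ∫ y, Real.exp (v y) ∂μ with hIμdef
    set Iν := ∫ y, Real.exp (v y) ∂ν with hIνdef
    have hIμ1 : 1 ≤ Iμ := one_le_integral_exp hvm hv0 hvS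
    have hIν1 : 1 ≤ Iν := one_le_integral_exp hvm hv0 hvS
    -- key identity : log A₁ - log A₂ = α c + log I  for each tilt
    have key : ∀ (P : Measure E) (w : Measure E), IsProbabilityMeasure P →
        (∀ (h : E → ℝ) (Ch : ℝ), Measurable h → (∀ y, |h y| ≤ Ch) →
          ∫ y, h y ∂w = (∫ y, h y * Real.exp (φ y) ∂P) / (∫ y, Real.exp (φ y) ∂P)) →
        Real.log (∫ y, Real.exp (α * g₁ y) ∂P) - Real.log (∫ y, Real.exp (α * g₂ y) ∂P)
          = α * c + Real.log (∫ y, Real.exp (v y) ∂w) := by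
      intro P w hP hint
      haveI := hP
      have hA1pos : 0 < ∫ y, Real.exp (α * g₁ y) ∂P :=
        integral_exp_pos' (measurable_const.mul hm₁) (fun y => by
          rw [abs_mul]; exact mul_le_mul_of_nonneg_left (hC₁ y) (abs_nonneg α))
      have hA2pos : 0 < ∫ y, Real.exp (α * g₂ y) ∂P :=
        integral_exp_pos' hφm (fun y => by
          rw [abs_mul]; exact mul_le_mul_of_nonneg_left (hC₂ y) (abs_nonneg α))
      have hw : ∫ y, Real.exp (v y) ∂w
          = (∫ y, Real.exp (v y) * Real.exp (φ y) ∂P) / (∫ y, Real.exp (φ y) ∂P) :=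
        hint _ (Real.exp (β * S)) hvm.exp hexpvb
      have hprod : ∀ y, Real.exp (v y) * Real.exp (φ y)
          = Real.exp (-(α * c)) * Real.exp (α * g₁ y) := by
        intro y
        rw [← Real.exp_add, ← Real.exp_add]
        congr 1
        rw [hvdef, hφdef, hu]
        ring
      have hw2 : ∫ y, Real.exp (v y) ∂w
          = Real.exp (-(α * c)) * (∫ y, Real.exp (α * g₁ y) ∂P)
            / (∫ y, Real.exp (α * g₂ y) ∂P) := by
        rw [hw, integral_congr_ae (Filter.Eventually.of_forall hprod), integral_const_mul]
      rw [hw2, Real.log_div (by positivity) hA2pos.ne', Real.log_mul (by positivity) hA1pos.ne',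
        Real.log_exp]
      ring
    have keyμ := key (Q x) μ inferInstance hμint
    have keyν := key (Q x') ν inferInstance hνint
    -- the two log-ratio bounds
    have hbd1 : Real.log Iμ - Real.log Iν ≤ Real.log (1 + g0 * (Real.exp (β * S) - 1)) :=
      log_ratio_le hvm hg00 (by positivity) hv0 hvS hTVμν
    have hbd2 : Real.log Iν - Real.log Iμ ≤ Real.log (1 + g0 * (Real.exp (β * S) - 1)) :=
      log_ratio_le hvm hg00 (by positivity) hv0 hvS hTVνμ
    have habs : |Real.log Iμ - Real.log Iν| ≤ Real.log (1 + g0 * (Real.exp (β * S) - 1)) :=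
      abs_le.2 ⟨by linarith, by linarith⟩
    -- assemble
    have hdiff : PsiOp Q f α g₁ x - PsiOp Q f α g₂ x
        - (PsiOp Q f α g₁ x' - PsiOp Q f α g₂ x')
        = (1 / α) * (Real.log Iμ - Real.log Iν) := by
      simp only [PsiOp]
      rw [show f x + 1 / α * Real.log (∫ y, Real.exp (α * g₁ y) ∂(Q x))
            - (f x + 1 / α * Real.log (∫ y, Real.exp (α * g₂ y) ∂(Q x)))
            - (f x' + 1 / α * Real.log (∫ y, Real.exp (α * g₁ y) ∂(Q x'))
            - (f x' + 1 / α * Real.log (∫ y, Real.exp (α * g₂ y) ∂(Q x'))))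
          = (1 / α) * ((Real.log (∫ y, Real.exp (α * g₁ y) ∂(Q x))
              - Real.log (∫ y, Real.exp (α * g₂ y) ∂(Q x)))
            - (Real.log (∫ y, Real.exp (α * g₁ y) ∂(Q x'))
              - Real.log (∫ y, Real.exp (α * g₂ y) ∂(Q x')))) by ring,
        keyμ, keyν]
      ring
    have hfinal : (1 / α) * (Real.log Iμ - Real.log Iν) ≤ (Real.log C / T) * S := by
      have step1 : (1 / α) * (Real.log Iμ - Real.log Iν)
          ≤ (1 / β) * |Real.log Iμ - Real.log Iν| := by
        have := le_abs_self ((1 / α) * (Real.log Iμ - Real.log Iν))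
        rw [abs_mul, abs_div, abs_one] at this
        exact this
      have step2 : (1 / β) * |Real.log Iμ - Real.log Iν|
          ≤ (1 / β) * Real.log (1 + g0 * (Real.exp (β * S) - 1)) :=
        mul_le_mul_of_nonneg_left habs (by positivity)
      have step3 : Real.log (1 + g0 * (Real.exp (β * S) - 1))
          ≤ ((β * S) / T) * Real.log C := by
        have := log_interp_bound hg00 hg01 (t := β * S) (T := T) (by positivity)
          (by rw [hTdef]; nlinarith) hT
        rwa [← hCdef] at this
      have step4 : (1 / β) * (((β * S) / T) * Real.log C) = (Real.log C / T) * S := by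
        field_simp
      calc (1 / α) * (Real.log Iμ - Real.log Iν)
          ≤ (1 / β) * |Real.log Iμ - Real.log Iν| := step1
        _ ≤ (1 / β) * Real.log (1 + g0 * (Real.exp (β * S) - 1)) := step2
        _ ≤ (1 / β) * (((β * S) / T) * Real.log C) :=
            mul_le_mul_of_nonneg_left step3 (by positivity)
        _ = (Real.log C / T) * S := step4
    calc PsiOp Q f α g₁ x - PsiOp Q f α g₂ x - (PsiOp Q f α g₁ x' - PsiOp Q f α g₂ x')
        = (1 / α) * (Real.log Iμ - Real.log Iν) := hdiff
      _ ≤ (Real.log C / T) * S := hfinal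
end

section
/- Let E be a Polish space with Borel σ-algebra 𝓔, f : E → ℝ bounded Borel measurable, α ≠ 0, and K̃ < ∞. Let Q_1, Q_2 be Markov kernels on E with associated weighted operators (S_j h)(x) = e^{α f(x)} ∫_E h(y) Q_j(x,dy), j = 1, 2. Suppose λ_1, λ_2 ∈ ℝ and bounded Borel measurable w_1, w_2 with ‖w_1‖_sp ≤ K̃ and ‖w_2‖_sp ≤ K̃ satisfy α w_j(x) = α (f(x) − λ_j) + ln ∫_E e^{α w_j(y)} Q_j(x,dy) for all x ∈ E, j = 1, 2. Then for every positive integer k and every x ∈ E: k |λ_1 − λ_2| ≤ |(1/α) ln ( (S_1^k 1)(x) / (S_2^k 1)(x) )| + 2 K̃. -/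
open MeasureTheory ProbabilityTheory Filter
open scoped ENNReal

/-- Weighted (Feynman–Kac) operator `(S_{f,α} h)(x) = e^{α f(x)} ∫ h(y) Q(x,dy)`. -/
noncomputable def Sop {E : Type*} [MeasurableSpace E] (Q : Kernel E E)
    (f : E → ℝ) (α : ℝ) (h : E → ℝ) : E → ℝ :=
  fun x => Real.exp (α * f x) * ∫ y, h y ∂ (Q x)

lemma keyEst {E : Type*} [MeasurableSpace E]
    (f : E → ℝ) (hf : Measurable f) (hfb : ∃ C, ∀ x, |f x| ≤ C)
    (α : ℝ) (Kt : ℝ)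
    (Q : Kernel E E) [IsMarkovKernel Q]
    (lam : ℝ) (w : E → ℝ) (hw : Measurable w) (hwb : ∃ C, ∀ x, |w x| ≤ C)
    (hsp : spanSemi w ≤ Kt)
    (heq : ∀ x : E, α * w x = α * (f x - lam) + Real.log (∫ y, Real.exp (α * w y) ∂ (Q x)))
    (x : E) (k : ℕ) :
    0 < (Sop Q f α)^[k] (fun _ => 1) x ∧
      |Real.log ((Sop Q f α)^[k] (fun _ => 1) x) - (k : ℝ) * (α * lam)| ≤ |α| * Kt := by
  obtain ⟨Cf, hCf⟩ := hfb
  obtain ⟨Cw, hCw⟩ := hwb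
  haveI : Nonempty E := ⟨x⟩
  set g : E → ℝ := fun y => Real.exp (α * w y) with hg_def
  have hg_meas : Measurable g := (hw.const_mul α).exp
  -- span bound on differences
  have hbdA : BddAbove (Set.range w) := ⟨Cw, by rintro _ ⟨y, rfl⟩; exact (abs_le.mp (hCw y)).2⟩
  have hbdB : BddBelow (Set.range w) := ⟨-Cw, by rintro _ ⟨y, rfl⟩; exact (abs_le.mp (hCw y)).1⟩
  have hdiff : ∀ y z : E, w y - w z ≤ Kt := by
    intro y z
    have h1 : w y ≤ ⨆ u, w u := le_ciSup hbdA y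
    have h2 : ⨅ u, w u ≤ w z := ciInf_le hbdB z
    have := hsp
    unfold spanSemi at this
    linarith
  set m : ℝ := Real.exp (α * w x - |α| * Kt) with hm_def
  set M : ℝ := Real.exp (α * w x + |α| * Kt) with hM_def
  have habsd : ∀ y : E, |α * w x - α * w y| ≤ |α| * Kt := by
    intro y
    have : α * w x - α * w y = α * (w x - w y) := by ring
    rw [this, abs_mul]
    have : |w x - w y| ≤ Kt := abs_le.mpr ⟨by linarith [hdiff y x], hdiff x y⟩
    exact mul_le_mul_of_nonneg_left this (abs_nonneg α)
  have hmg : ∀ y : E, m ≤ g y := by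
    intro y
    apply Real.exp_le_exp.mpr
    have := abs_le.mp (habsd y)
    linarith [this.2]
  have hgM : ∀ y : E, g y ≤ M := by
    intro y
    apply Real.exp_le_exp.mpr
    have := abs_le.mp (habsd y)
    linarith [this.1]
  have hm_pos : 0 < m := Real.exp_pos _
  -- integrability helper
  have hint : ∀ (h : E → ℝ) (C : ℝ), Measurable h → (∀ y, |h y| ≤ C) →
      ∀ z : E, Integrable h (Q z) := by
    intro h C hm hb z
    exact (integrable_const C).mono' hm.aestronglyMeasurable
      (Eventually.of_forall fun y => by simpa using hb y)
  have hgb : ∀ y, |g y| ≤ Real.exp (|α| * Cw) := by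
    intro y
    rw [abs_of_pos (Real.exp_pos _)]
    apply Real.exp_le_exp.mpr
    calc α * w y ≤ |α * w y| := le_abs_self _
      _ = |α| * |w y| := abs_mul _ _
      _ ≤ |α| * Cw := mul_le_mul_of_nonneg_left (hCw y) (abs_nonneg α)
  have hgint : ∀ z : E, Integrable g (Q z) := hint g _ hg_meas hgb
  -- S g = e^{αλ} g
  have hSg : ∀ z : E, Real.exp (α * f z) * ∫ y, g y ∂ (Q z) = Real.exp (α * lam) * g z := by
    intro z
    have hI : 0 < ∫ y, g y ∂ (Q z) := by
      have h1 : ∫ _, m ∂ (Q z) ≤ ∫ y, g y ∂ (Q z) :=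
        integral_mono (integrable_const m) (hgint z) hmg
      rw [integral_const] at h1
      simp at h1
      linarith
    have hz : g z = Real.exp (α * (f z - lam)) * ∫ y, g y ∂ (Q z) := by
      simp only [hg_def]
      rw [heq z, Real.exp_add, Real.exp_log hI]
    rw [hz, mul_sub, Real.exp_sub]
    field_simp
  -- main induction
  have main : ∀ n : ℕ, Measurable ((Sop Q f α)^[n] (fun _ => 1)) ∧
      (∃ C, ∀ y, |(Sop Q f α)^[n] (fun _ => 1) y| ≤ C) ∧
      ∀ y : E, m * (Sop Q f α)^[n] (fun _ => 1) y ≤ Real.exp ((n : ℝ) * (α * lam)) * g y ∧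
        Real.exp ((n : ℝ) * (α * lam)) * g y ≤ M * (Sop Q f α)^[n] (fun _ => 1) y := by
    intro n
    induction n with
    | zero =>
      refine ⟨measurable_const, ⟨1, fun y => by simp⟩, fun y => ?_⟩
      simp only [Function.iterate_zero, id_eq, Nat.cast_zero, zero_mul, Real.exp_zero,
        one_mul, mul_one]
      exact ⟨hmg y, hgM y⟩
    | succ n ih =>
      obtain ⟨hmeas, ⟨C, hC⟩, hbd⟩ := ih
      set h := (Sop Q f α)^[n] (fun _ => 1) with hh
      have hint_h : ∀ z, Integrable h (Q z) := hint h C hmeas hC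
      have hIm : Measurable fun z => ∫ y, h y ∂ (Q z) :=
        (MeasureTheory.StronglyMeasurable.integral_kernel_prod_right' (κ := Q)
          ((hmeas.comp measurable_snd).stronglyMeasurable)).measurable
      have hit : (Sop Q f α)^[n + 1] (fun _ => 1) = Sop Q f α h :=
        Function.iterate_succ_apply' _ _ _
    
      refine ⟨?_, ⟨Real.exp (|α| * Cf) * C, ?_⟩, ?_⟩
      · rw [hit]
        exact ((hf.const_mul α).exp).mul hIm
      · intro y
        rw [hit]
        show |Real.exp (α * f y) * ∫ z, h z ∂ (Q y)| ≤ _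
        rw [abs_mul, abs_of_pos (Real.exp_pos _)]
        have h1 : Real.exp (α * f y) ≤ Real.exp (|α| * Cf) := by
          apply Real.exp_le_exp.mpr
          calc α * f y ≤ |α * f y| := le_abs_self _
            _ = |α| * |f y| := abs_mul _ _
            _ ≤ |α| * Cf := mul_le_mul_of_nonneg_left (hCf y) (abs_nonneg α)
        have h2 : |∫ z, h z ∂ (Q y)| ≤ C := by
          have := norm_integral_le_of_norm_le_const (μ := Q y) (f := h) (C := C)
            (Eventually.of_forall fun z => by rw [Real.norm_eq_abs]; exact hC z)
          simpa using this
        have hC0 : 0 ≤ C := le_trans (abs_nonneg _) (hC y)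
        exact mul_le_mul h1 h2 (abs_nonneg _) (Real.exp_pos _).le
      · intro y
        rw [hit]
        show m * (Real.exp (α * f y) * ∫ z, h z ∂ (Q y)) ≤ _ ∧
          _ ≤ M * (Real.exp (α * f y) * ∫ z, h z ∂ (Q y))
        have hi1 : ∫ z, m * h z ∂ (Q y) ≤ ∫ z, Real.exp ((n : ℝ) * (α * lam)) * g z ∂ (Q y) :=
          integral_mono ((hint_h y).const_mul m) ((hgint y).const_mul _) fun z => (hbd z).1
        have hi2 : ∫ z, Real.exp ((n : ℝ) * (α * lam)) * g z ∂ (Q y) ≤ ∫ z, M * h z ∂ (Q y) :=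
          integral_mono ((hgint y).const_mul _) ((hint_h y).const_mul M) fun z => (hbd z).2
        simp only [integral_const_mul] at hi1 hi2
        have hexp : Real.exp (((n : ℝ) + 1) * (α * lam)) * g y
            = Real.exp ((n : ℝ) * (α * lam)) * (Real.exp (α * lam) * g y) := by
          rw [show ((n : ℝ) + 1) * (α * lam) = (n : ℝ) * (α * lam) + α * lam by ring,
            Real.exp_add]; ring
        have hcast : ((n + 1 : ℕ) : ℝ) = (n : ℝ) + 1 := by push_cast; ring
        constructor
        · have : m * (Real.exp (α * f y) * ∫ z, h z ∂ (Q y))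
              = Real.exp (α * f y) * (m * ∫ z, h z ∂ (Q y)) := by ring
          rw [this, hcast, hexp, ← hSg y]
          calc Real.exp (α * f y) * (m * ∫ z, h z ∂ (Q y))
              ≤ Real.exp (α * f y) * (Real.exp ((n : ℝ) * (α * lam)) * ∫ z, g z ∂ (Q y)) :=
                mul_le_mul_of_nonneg_left hi1 (Real.exp_pos _).le
            _ = Real.exp ((n : ℝ) * (α * lam)) * (Real.exp (α * f y) * ∫ z, g z ∂ (Q y)) := by ring
        · have hgoal : M * (Real.exp (α * f y) * ∫ z, h z ∂ (Q y))
              = Real.exp (α * f y) * (M * ∫ z, h z ∂ (Q y)) := by ring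
          rw [hgoal, hcast, hexp, ← hSg y]
          calc Real.exp ((n : ℝ) * (α * lam)) * (Real.exp (α * f y) * ∫ z, g z ∂ (Q y))
              = Real.exp (α * f y) * (Real.exp ((n : ℝ) * (α * lam)) * ∫ z, g z ∂ (Q y)) := by ring
            _ ≤ Real.exp (α * f y) * (M * ∫ z, h z ∂ (Q y)) :=
                mul_le_mul_of_nonneg_left hi2 (Real.exp_pos _).le
  obtain ⟨-, -, hbd⟩ := main k
  obtain ⟨hb1, hb2⟩ := hbd x
  set S := (Sop Q f α)^[k] (fun _ => 1) x with hS
  have hgx : g x = Real.exp (α * w x) := rfl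
  have hSpos : 0 < S := by
    have hM_pos : 0 < M := Real.exp_pos _
    nlinarith [Real.exp_pos ((k : ℝ) * (α * lam)), Real.exp_pos (α * w x)]
  refine ⟨hSpos, ?_⟩
  have hub : S ≤ Real.exp ((k : ℝ) * (α * lam) + |α| * Kt) := by
    rw [show (k : ℝ) * (α * lam) + |α| * Kt
        = ((k : ℝ) * (α * lam) + α * w x) - (α * w x - |α| * Kt) by ring,
      Real.exp_sub, Real.exp_add]
    rw [le_div_iff₀ (Real.exp_pos _)]
    rw [hgx] at hb1
    calc S * Real.exp (α * w x - |α| * Kt) = m * S := by rw [hm_def]; ring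
      _ ≤ Real.exp ((k : ℝ) * (α * lam)) * Real.exp (α * w x) := hb1
  have hlb : Real.exp ((k : ℝ) * (α * lam) - |α| * Kt) ≤ S := by
    rw [show (k : ℝ) * (α * lam) - |α| * Kt
        = ((k : ℝ) * (α * lam) + α * w x) - (α * w x + |α| * Kt) by ring,
      Real.exp_sub, Real.exp_add]
    rw [div_le_iff₀ (Real.exp_pos _)]
    rw [hgx] at hb2
    calc Real.exp ((k : ℝ) * (α * lam)) * Real.exp (α * w x) ≤ M * S := hb2
      _ = S * Real.exp (α * w x + |α| * Kt) := by rw [hM_def]; ring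
  have h1 : Real.log S ≤ (k : ℝ) * (α * lam) + |α| * Kt :=
    (Real.log_le_iff_le_exp hSpos).mpr hub
  have h2 : (k : ℝ) * (α * lam) - |α| * Kt ≤ Real.log S :=
    (Real.le_log_iff_exp_le hSpos).mpr hlb
  exact abs_le.mpr ⟨by linarith, by linarith⟩

/-- Corollary 2, second estimate: if `(λ_j, w_j)` solve the risk-sensitive
Poisson equations for kernels `Q_j`, `j = 1,2`, with `‖w_j‖_sp ≤ K̃`, then for all `k ≥ 1`
and `x`, `k |λ_1 − λ_2| ≤ |(1/α) ln ((S_1^k 1)(x) / (S_2^k 1)(x))| + 2 K̃`. -/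
theorem stmt9 {E : Type*} [TopologicalSpace E] [PolishSpace E]
    [MeasurableSpace E] [BorelSpace E]
    (f : E → ℝ) (hf : Measurable f) (hfb : ∃ C, ∀ x, |f x| ≤ C)
    (α : ℝ) (hα : α ≠ 0) (Kt : ℝ)
    (Q₁ Q₂ : Kernel E E) [IsMarkovKernel Q₁] [IsMarkovKernel Q₂]
    (lam₁ lam₂ : ℝ) (w₁ w₂ : E → ℝ)
    (hw₁ : Measurable w₁) (hw₂ : Measurable w₂)
    (hw₁b : ∃ C, ∀ x, |w₁ x| ≤ C) (hw₂b : ∃ C, ∀ x, |w₂ x| ≤ C)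
    (hsp₁ : spanSemi w₁ ≤ Kt) (hsp₂ : spanSemi w₂ ≤ Kt)
    (heq₁ : ∀ x : E, α * w₁ x =
      α * (f x - lam₁) + Real.log (∫ y, Real.exp (α * w₁ y) ∂ (Q₁ x)))
    (heq₂ : ∀ x : E, α * w₂ x =
      α * (f x - lam₂) + Real.log (∫ y, Real.exp (α * w₂ y) ∂ (Q₂ x))) :
    ∀ k : ℕ, 1 ≤ k → ∀ x : E,
      (k : ℝ) * |lam₁ - lam₂| ≤
        |(1 / α) * Real.log ((Sop Q₁ f α)^[k] (fun _ => 1) x /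
          (Sop Q₂ f α)^[k] (fun _ => 1) x)| + 2 * Kt := by

  intro k hk x
  obtain ⟨hpos1, hb1⟩ := keyEst f hf hfb α Kt Q₁ lam₁ w₁ hw₁ hw₁b hsp₁ heq₁ x k
  obtain ⟨hpos2, hb2⟩ := keyEst f hf hfb α Kt Q₂ lam₂ w₂ hw₂ hw₂b hsp₂ heq₂ x k
  set A := (Sop Q₁ f α)^[k] (fun _ => 1) x with hA
  set B := (Sop Q₂ f α)^[k] (fun _ => 1) x with hB
  have hαpos : 0 < |α| := abs_pos.mpr hα
  have hlog : Real.log (A / B) = Real.log A - Real.log B :=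
    Real.log_div (ne_of_gt hpos1) (ne_of_gt hpos2)
  have hexpand : |(1 / α) * Real.log (A / B)| = |Real.log A - Real.log B| / |α| := by
    rw [hlog, abs_mul, abs_div, abs_one, one_div, inv_mul_eq_div]
  -- triangle inequality
  have hd1 := abs_le.mp hb1
  have hd2 := abs_le.mp hb2
  have hd3a := le_abs_self (Real.log A - Real.log B)
  have hd3b := neg_abs_le (Real.log A - Real.log B)
  have hk0 : (0 : ℝ) ≤ (k : ℝ) := Nat.cast_nonneg k
  have hH : |α| * ((k : ℝ) * |lam₁ - lam₂|) ≤ |Real.log A - Real.log B| + 2 * (|α| * Kt) := by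
    have he : |α| * ((k : ℝ) * |lam₁ - lam₂|) = |(k : ℝ) * (α * lam₁) - (k : ℝ) * (α * lam₂)| := by
      rw [show (k : ℝ) * (α * lam₁) - (k : ℝ) * (α * lam₂) = ((k : ℝ) * α) * (lam₁ - lam₂) by ring,
        abs_mul, abs_mul, abs_of_nonneg hk0]
      ring
    rw [he]
    apply abs_le.mpr
    constructor <;> linarith
  have h2 : ((k : ℝ) * |lam₁ - lam₂| - 2 * Kt) * |α| ≤ |Real.log A - Real.log B| := by
    nlinarith
  have h3 : (k : ℝ) * |lam₁ - lam₂| - 2 * Kt ≤ |Real.log A - Real.log B| / |α| :=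
    (le_div_iff₀ hαpos).mpr h2
  rw [hexpand]
  linarith
end
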